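/- Boundedness of iterates under summable weighted SAA errors (Proposition 1): let f : E → ℝ and x* ∈ Ω with f(x*) ≤ f(y) for all y ∈ Ω. For each k ≥ 1 let f_k : E → ℝ be convex. Let (x_k)_{k≥1} be a sequence with x_1 ∈ Ω and, for every k ≥ 1, x_{k+1} = P(x_k − α_k·ζ_k·q_k⁻¹·g_k), where g_k is a subgradient of f_k at x_k, q_k = max(1, ‖g_k‖), 0 < ζ_k ≤ ζ̄, and 0 ≤ α_k ≤ C₂/k. Define ē_k = |f_k(x_k) − f(x_k)| + |f_k(x*) − f(x*)| and suppose ∑_{k=1}^∞ ē_k/k ≤ C₄ < ∞. Then for every k ≥ 1, ‖x_k − x*‖² ≤ ‖x_1 − x*‖² + 2·C₂·ζ̄·C₄ + ζ̄²·C₂²·(π²/6); in particular, the sequence (x_k) is bounded. -/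

import Mathlib

open scoped RealInnerProductSpace

set_option maxHeartbeats 1000000 in
theorem stmt_8 {E : Type*} [NormedAddCommGroup E] [InnerProductSpace ℝ E]
    (Ω : Set E) (hΩne : Ω.Nonempty) (hΩconv : Convex ℝ Ω)
    (P : E → E)
    (hPnonexp : ∀ u v : E, ‖P u - P v‖ ≤ ‖u - v‖)
    (hPmem : ∀ u : E, P u ∈ Ω)
    (hPfix : ∀ y ∈ Ω, P y = y)
    (C₂ C₄ ζbar : ℝ) (hC₂ : 0 < C₂) (hC₄ : 0 < C₄) (hζbar : 0 < ζbar)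
    (f : E → ℝ)
    (xstar : E) (hxstar : xstar ∈ Ω) (hopt : ∀ y ∈ Ω, f xstar ≤ f y)
    (fk : ℕ → E → ℝ) (hfk : ∀ k : ℕ, 1 ≤ k → ConvexOn ℝ Set.univ (fk k))
    (x g : ℕ → E) (α ζ : ℕ → ℝ)
    (hx1 : x 1 ∈ Ω)
    (hg : ∀ k : ℕ, 1 ≤ k → ∀ y : E, fk k (x k) + ⟪g k, y - x k⟫ ≤ fk k y)
    (hζ : ∀ k : ℕ, 1 ≤ k → 0 < ζ k ∧ ζ k ≤ ζbar)
    (hα : ∀ k : ℕ, 1 ≤ k → 0 ≤ α k ∧ α k ≤ C₂ / k)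
    (hupd : ∀ k : ℕ, 1 ≤ k →
      x (k + 1) = P (x k - (α k * ζ k * (max 1 ‖g k‖)⁻¹) • g k))
    (ebar : ℕ → ℝ)
    (hebar : ∀ k : ℕ, 1 ≤ k →
      ebar k = |fk k (x k) - f (x k)| + |fk k xstar - f xstar|)
    (hsum : ∀ K : ℕ, ∑ k ∈ Finset.Icc 1 K, ebar k / k ≤ C₄) :
    (∀ k : ℕ, 1 ≤ k →
      ‖x k - xstar‖ ^ 2 ≤
        ‖x 1 - xstar‖ ^ 2 + 2 * C₂ * ζbar * C₄ + ζbar ^ 2 * C₂ ^ 2 * (Real.pi ^ 2 / 6)) ∧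
    ∃ M : ℝ, ∀ k : ℕ, 1 ≤ k → ‖x k‖ ≤ M := by
  have hxmem : ∀ k : ℕ, 1 ≤ k → x k ∈ Ω := by
    intro k hk
    induction k with
    | zero => omega
    | succ n ih =>
      rcases Nat.eq_zero_or_pos n with rfl | hn
      · exact hx1
      · rw [hupd n hn]; exact hPmem _
  -- nonnegativity of ebar
  have hebar0 : ∀ k : ℕ, 1 ≤ k → 0 ≤ ebar k := by
    intro k hk; rw [hebar k hk]; positivity
  -- one-step estimate
  have key : ∀ k : ℕ, 1 ≤ k →
      ‖x (k+1) - xstar‖^2 ≤ ‖x k - xstar‖^2 + 2*C₂*ζbar*(ebar k / k)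
        + ζbar^2*C₂^2*((1:ℝ)/(k:ℝ)^2) := by
    intro k hk
    have hk1 : (1:ℝ) ≤ (k:ℝ) := by exact_mod_cast hk
    have hkpos : (0:ℝ) < (k:ℝ) := by linarith
    set s : ℝ := α k * ζ k * (max 1 ‖g k‖)⁻¹ with hs
    have hq1 : (1:ℝ) ≤ max 1 ‖g k‖ := le_max_left _ _
    have hqpos : (0:ℝ) < max 1 ‖g k‖ := lt_of_lt_of_le one_pos hq1
    obtain ⟨hζpos, hζle⟩ := hζ k hk
    obtain ⟨hα0, hαle⟩ := hα k hk
    have hs0 : 0 ≤ s := mul_nonneg (mul_nonneg hα0 hζpos.le) (inv_nonneg.2 hqpos.le)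
    have haz0 : 0 ≤ α k * ζ k := mul_nonneg hα0 hζpos.le
    have hsq : s * max 1 ‖g k‖ = α k * ζ k := by
      rw [hs]; field_simp
    have hsle : s ≤ α k * ζ k := by nlinarith
    have hsg : s * ‖g k‖ ≤ α k * ζ k := by
      have hgle : ‖g k‖ ≤ max 1 ‖g k‖ := le_max_right _ _
      nlinarith
    have haz : α k * ζ k ≤ C₂ * ζbar / k := by
      have h1 : α k * ζ k ≤ (C₂ / k) * ζbar :=
        mul_le_mul hαle hζle hζpos.le (by positivity)
      calc α k * ζ k ≤ (C₂ / k) * ζbar := h1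
        _ = C₂ * ζbar / k := by ring
    have h1 : ‖x (k+1) - xstar‖ ≤ ‖(x k - xstar) - s • g k‖ := by
      rw [hupd k hk]
      calc ‖P (x k - s • g k) - xstar‖
          = ‖P (x k - s • g k) - P xstar‖ := by rw [hPfix xstar hxstar]
        _ ≤ ‖x k - s • g k - xstar‖ := hPnonexp _ _
        _ = ‖(x k - xstar) - s • g k‖ := by rw [sub_right_comm]
    have h2 : ‖x (k+1) - xstar‖^2 ≤ ‖(x k - xstar) - s • g k‖^2 :=
      pow_le_pow_left₀ (norm_nonneg _) h1 2
    have hexp : ‖(x k - xstar) - s • g k‖^2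
        = ‖x k - xstar‖^2 - 2*(s * ⟪g k, x k - xstar⟫) + s^2 * ‖g k‖^2 := by
      rw [@norm_sub_sq_real, real_inner_smul_right, real_inner_comm, norm_smul]
      rw [Real.norm_eq_abs, abs_of_nonneg hs0]
      ring
    have herr : fk k xstar - fk k (x k) ≤ ebar k := by
      have hop := hopt (x k) (hxmem k hk)
      rw [hebar k hk]
      have ha : fk k xstar - f xstar ≤ |fk k xstar - f xstar| := le_abs_self _
      have hb : f (x k) - fk k (x k) ≤ |fk k (x k) - f (x k)| := by
        rw [abs_sub_comm]; exact le_abs_self _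
      linarith
    have hinner : -⟪g k, x k - xstar⟫ ≤ ebar k := by
      have h := hg k hk xstar
      have heq : ⟪g k, xstar - x k⟫ = -⟪g k, x k - xstar⟫ := by
        rw [← inner_neg_right, neg_sub]
      rw [heq] at h
      linarith
    have hgsq : s^2 * ‖g k‖^2 ≤ (α k * ζ k)^2 := by
      nlinarith [mul_nonneg hs0 (norm_nonneg (g k)), norm_nonneg (g k)]
    have h3 : ‖x (k+1) - xstar‖^2 ≤ ‖x k - xstar‖^2 + 2*(s * ebar k) + (α k * ζ k)^2 := by
      nlinarith [mul_le_mul_of_nonneg_left hinner hs0]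
    have h4 : 2*(s * ebar k) ≤ 2*C₂*ζbar*(ebar k / k) := by
      have hsC : s ≤ C₂ * ζbar / k := hsle.trans haz
      have := mul_le_mul_of_nonneg_right hsC (hebar0 k hk)
      calc 2*(s * ebar k) ≤ 2*((C₂*ζbar/k) * ebar k) := by linarith
        _ = 2*C₂*ζbar*(ebar k / k) := by field_simp
    have h5 : (α k * ζ k)^2 ≤ ζbar^2*C₂^2*((1:ℝ)/(k:ℝ)^2) := by
      have := pow_le_pow_left₀ haz0 haz 2
      calc (α k * ζ k)^2 ≤ (C₂ * ζbar / k)^2 := this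
        _ = ζbar^2*C₂^2*((1:ℝ)/(k:ℝ)^2) := by field_simp
    linarith
  -- main telescoped bound
  have main : ∀ k : ℕ, 1 ≤ k →
      ‖x k - xstar‖^2 ≤ ‖x 1 - xstar‖^2
        + 2*C₂*ζbar*(∑ j ∈ Finset.Icc 1 (k-1), ebar j / (j:ℝ))
        + ζbar^2*C₂^2*(∑ j ∈ Finset.Icc 1 (k-1), (1:ℝ)/(j:ℝ)^2) := by
    intro k hk
    induction k with
    | zero => omega
    | succ n ih =>
      rcases Nat.eq_zero_or_pos n with rfl | hn
      · simp
      · obtain ⟨m, rfl⟩ : ∃ m, n = m + 1 := ⟨n-1, by omega⟩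
        have hih := ih (by omega)
        have hstep := key (m+1) (by omega)
        have hsplit1 : ∑ j ∈ Finset.Icc 1 (m+1), ebar j / (j:ℝ)
            = (∑ j ∈ Finset.Icc 1 m, ebar j / (j:ℝ)) + ebar (m+1)/((m+1:ℕ):ℝ) :=
          Finset.sum_Icc_succ_top (by omega) _
        have hsplit2 : ∑ j ∈ Finset.Icc 1 (m+1), (1:ℝ)/(j:ℝ)^2
            = (∑ j ∈ Finset.Icc 1 m, (1:ℝ)/(j:ℝ)^2) + (1:ℝ)/(((m+1:ℕ)):ℝ)^2 :=
          Finset.sum_Icc_succ_top (by omega) _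
        simp only [Nat.add_sub_cancel] at hih ⊢
        rw [hsplit1, hsplit2]
        push_cast at hstep hih ⊢
        linarith
  have hB0 : (0:ℝ) ≤ ‖x 1 - xstar‖^2 + 2*C₂*ζbar*C₄ + ζbar^2*C₂^2*(Real.pi^2/6) := by
    positivity
  have hbdd : ∀ k : ℕ, 1 ≤ k →
      ‖x k - xstar‖^2 ≤ ‖x 1 - xstar‖^2 + 2*C₂*ζbar*C₄ + ζbar^2*C₂^2*(Real.pi^2/6) := by
    intro k hk
    have h := main k hk
    have hs1 : (∑ j ∈ Finset.Icc 1 (k-1), ebar j / (j:ℝ)) ≤ C₄ := hsum (k-1)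
    have hs2 : (∑ j ∈ Finset.Icc 1 (k-1), (1:ℝ)/(j:ℝ)^2) ≤ Real.pi^2/6 :=
      sum_le_hasSum _ (fun i _ => by positivity) hasSum_zeta_two
    have c1 : 0 ≤ 2*C₂*ζbar := by positivity
    have c2 : 0 ≤ ζbar^2*C₂^2 := by positivity
    nlinarith [mul_le_mul_of_nonneg_left hs1 c1, mul_le_mul_of_nonneg_left hs2 c2]
  refine ⟨hbdd, ⟨Real.sqrt (‖x 1 - xstar‖^2 + 2*C₂*ζbar*C₄ + ζbar^2*C₂^2*(Real.pi^2/6)) + ‖xstar‖, ?_⟩⟩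
  intro k hk
  have h1 : ‖x k - xstar‖ ≤
      Real.sqrt (‖x 1 - xstar‖^2 + 2*C₂*ζbar*C₄ + ζbar^2*C₂^2*(Real.pi^2/6)) := by
    rw [show ‖x k - xstar‖ = Real.sqrt (‖x k - xstar‖^2) by
      rw [Real.sqrt_sq (norm_nonneg _)]]
    exact Real.sqrt_le_sqrt (hbdd k hk)
  calc ‖x k‖ = ‖(x k - xstar) + xstar‖ := by rw [sub_add_cancel]
    _ ≤ ‖x k - xstar‖ + ‖xstar‖ := norm_add_le _ _
    _ ≤ _ := by linarith
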